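/- Let C be a nonempty compact convex subset of a real uniformly convex Banach space X, let T : C → C be a uniformly L-Lipschitzian, nearly nonexpansive mapping with respect to {a_n} with Σ_{n=0}^∞ a_n < ∞, let {α_n} satisfy 0 < a ≤ α_n ≤ b < 1 for all n, and let {x_n} be the modified Picard–Mann hybrid iteration y_n = (1 − α_n)x_n + α_n T^n x_n, x_{n+1} = T^n y_n. Then lim_{n→∞} ‖x_n − T x_n‖ = 0. -/

import Mathlib

open Filter

lemma uc_slack {X : Type*} [NormedAddCommGroup X] [NormedSpace ℝ X] [UniformConvexSpace X]
    {ε r : ℝ} (hε : 0 < ε) (hr : 0 < r) :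
    ∃ δ > 0, ∀ (η : ℝ) (u v : X), 0 ≤ η → η ≤ r → ‖u‖ ≤ r + η → ‖v‖ ≤ r + η →
      ε ≤ ‖u - v‖ → ‖u + v‖ ≤ 2 * (r + η) - δ := by
  obtain ⟨δ, hδ, h⟩ := exists_forall_closed_ball_dist_add_le_two_mul_sub X (half_pos hε) r
  refine ⟨δ, hδ, fun η u v hη hηr hu hv huv => ?_⟩
  have hrη : 0 < r + η := by linarith
  set s : ℝ := r / (r + η) with hs
  have hs0 : 0 < s := div_pos hr hrη
  have hsr : s * (r + η) = r := div_mul_cancel₀ _ hrη.ne'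
  have hshalf : 1/2 ≤ s := by rw [hs, le_div_iff₀ hrη]; linarith
  have h1 : ‖s • u‖ ≤ r := by
    rw [norm_smul, Real.norm_of_nonneg hs0.le]
    calc s * ‖u‖ ≤ s * (r + η) := by exact mul_le_mul_of_nonneg_left hu hs0.le
    _ = r := hsr
  have h2 : ‖s • v‖ ≤ r := by
    rw [norm_smul, Real.norm_of_nonneg hs0.le]
    calc s * ‖v‖ ≤ s * (r + η) := by exact mul_le_mul_of_nonneg_left hv hs0.le
    _ = r := hsr
  have h3 : ε/2 ≤ ‖s • u - s • v‖ := by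
    rw [← smul_sub, norm_smul, Real.norm_of_nonneg hs0.le]
    nlinarith [norm_nonneg (u - v)]
  have h4 := h h1 h2 h3
  rw [← smul_add, norm_smul, Real.norm_of_nonneg hs0.le] at h4
  have h5 : r * ‖u + v‖ ≤ (2 * r - δ) * (r + η) := by
    rw [hs, div_mul_eq_mul_div, div_le_iff₀ hrη] at h4
    linarith
  nlinarith [norm_nonneg (u + v)]

lemma seq_conv {c e : ℕ → ℝ} (hc : ∀ n, 0 ≤ c n) (he : ∀ n, 0 ≤ e n) (hsum : Summable e)
    (hstep : ∀ n, c (n + 1) ≤ c n + e n) : ∃ l, Tendsto c atTop (nhds l) := by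
  set s : ℕ → ℝ := fun n => ∑ i ∈ Finset.range n, e i with hs
  have hmono : Antitone (fun n => c n - s n) := by
    apply antitone_nat_of_succ_le
    intro n
    have : s (n + 1) = s n + e n := Finset.sum_range_succ e n
    rw [this]
    linarith [hstep n]
  have hbdd : BddBelow (Set.range fun n => c n - s n) := by
    refine ⟨-(∑' i, e i), ?_⟩
    rintro _ ⟨n, rfl⟩
    have h1 : s n ≤ ∑' i, e i := Summable.sum_le_tsum (Finset.range n) (fun i _ => he i) hsum
    have := hc n
    simp only
    linarith
  have h1 := tendsto_atTop_ciInf hmono hbdd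
  have h2 : Tendsto s atTop (nhds (∑' i, e i)) := hsum.hasSum.tendsto_sum_nat
  refine ⟨(⨅ n, c n - s n) + ∑' i, e i, ?_⟩
  have h3 := h1.add h2
  simpa using h3

lemma exists_fixed {X : Type*} [NormedAddCommGroup X] [NormedSpace ℝ X] [UniformConvexSpace X]
    (C : Set X) (hC : C.Nonempty) (hCcp : IsCompact C) (hCcv : Convex ℝ C)
    (T : X → X) (hT : Set.MapsTo T C C)
    (L : ℝ) (hTL1 : ∀ x ∈ C, ∀ y ∈ C, ‖T x - T y‖ ≤ L * ‖x - y‖)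
    (a : ℕ → ℝ) (halim : Tendsto a atTop (nhds 0))
    (hTa : ∀ x ∈ C, ∀ y ∈ C, ∀ n, 1 ≤ n → ‖T^[n] x - T^[n] y‖ ≤ ‖x - y‖ + a n) :
    ∃ p ∈ C, T p = p := by
  obtain ⟨q, hq⟩ := hC
  set z : ℕ → X := fun n => T^[n] q with hzdef
  have hz : ∀ n, z n ∈ C := fun n => (hT.iterate n) hq
  obtain ⟨R, hR⟩ := hCcp.isBounded.exists_norm_le
  have hbd : ∀ w : X, IsBoundedUnder (· ≤ ·) atTop fun n => ‖z n - w‖ := by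
    intro w
    refine isBoundedUnder_of ⟨R + ‖w‖, fun n => (norm_sub_le _ _).trans ?_⟩
    exact add_le_add_left (hR _ (hz n)) _
  have hcb : ∀ w : X, IsCoboundedUnder (· ≤ ·) atTop fun n => ‖z n - w‖ := fun w =>
    isCoboundedUnder_le_of_le atTop (fun n => norm_nonneg _)
  set φ : X → ℝ := fun w => limsup (fun n => ‖z n - w‖) atTop with hφdef
  have hφlip : ∀ w₁ w₂ : X, φ w₁ ≤ φ w₂ + ‖w₂ - w₁‖ := by
    intro w₁ w₂
    have hmono : ∀ n, ‖z n - w₁‖ ≤ ‖z n - w₂‖ + ‖w₂ - w₁‖ := by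
      intro n
      calc ‖z n - w₁‖ = ‖(z n - w₂) + (w₂ - w₁)‖ := by rw [sub_add_sub_cancel]
        _ ≤ ‖z n - w₂‖ + ‖w₂ - w₁‖ := norm_add_le _ _
    have h1 : φ w₁ ≤ limsup (fun n => ‖z n - w₂‖ + ‖w₂ - w₁‖) atTop :=
      limsup_le_limsup (Eventually.of_forall hmono) (hcb w₁)
        (isBoundedUnder_of ⟨R + ‖w₂‖ + ‖w₂ - w₁‖, fun n =>
          add_le_add_left ((norm_sub_le _ _).trans (add_le_add_left (hR _ (hz n)) _)) _⟩)
    rwa [limsup_add_const atTop _ _ (hbd w₂) (hcb w₂)] at h1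
  have hφcont : Continuous φ := by
    have : LipschitzWith 1 φ := by
      refine LipschitzWith.of_dist_le_mul fun w₁ w₂ => ?_
      rw [Real.dist_eq, dist_eq_norm, NNReal.coe_one, one_mul, abs_sub_le_iff]
      constructor
      · have := hφlip w₁ w₂; rw [norm_sub_rev w₂ w₁] at this; linarith
      · have := hφlip w₂ w₁; linarith
    exact this.continuous
  obtain ⟨p, hp, hmin'⟩ := hCcp.exists_isMinOn ⟨q, hq⟩ hφcont.continuousOn
  have hmin : ∀ w ∈ C, φ p ≤ φ w := fun w hw => hmin' hw
  set r : ℝ := φ p with hrdef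
  have hr0 : 0 ≤ r :=
    le_limsup_of_frequently_le (Frequently.of_forall fun n => norm_nonneg _) (hbd p)
  have key1 : ∀ m, 1 ≤ m → φ (T^[m] p) ≤ r + a m := by
    intro m hm
    have hshift : (fun n => ‖z (n + m) - T^[m] p‖) = fun n => ‖T^[m] (z n) - T^[m] p‖ := by
      funext n
      congr 2
      rw [hzdef]
      simp only
      rw [add_comm n m, Function.iterate_add_apply]
    have h2 : φ (T^[m] p) = limsup (fun n => ‖z (n + m) - T^[m] p‖) atTop :=
      (limsup_nat_add (fun n => ‖z n - T^[m] p‖) m).symm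
    rw [h2, hshift]
    have h3 : limsup (fun n => ‖T^[m] (z n) - T^[m] p‖) atTop ≤
        limsup (fun n => ‖z n - p‖ + a m) atTop :=
      limsup_le_limsup (Eventually.of_forall fun n => hTa (z n) (hz n) p hp m hm)
        (isCoboundedUnder_le_of_le atTop (fun n => norm_nonneg _))
        (isBoundedUnder_of ⟨R + ‖p‖ + a m, fun n =>
          add_le_add_left ((norm_sub_le _ _).trans (add_le_add_left (hR _ (hz n)) _)) _⟩)
    rw [limsup_add_const atTop _ _ (hbd p) (hcb p)] at h3
    exact h3
  -- main claim
  have claim : ∀ ε > (0:ℝ), ∀ᶠ m in atTop, ‖T^[m] p - p‖ < ε := by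
    intro ε hε
    rcases hr0.lt_or_eq with hr | hr
    · -- r > 0 : uniform convexity argument
      obtain ⟨δ, hδ, hUC⟩ := uc_slack (X := X) hε hr
      have hsmall : ∀ᶠ m in atTop, a m < min r δ / 4 := by
        have : (0:ℝ) < min r δ / 4 := by positivity
        exact halim.eventually (gt_mem_nhds this) |>.mono fun m hm => hm
      filter_upwards [hsmall, eventually_ge_atTop 1] with m ham hm1
      by_contra hcon
      push_neg at hcon
      set u : X := T^[m] p with hudef
      have hu : u ∈ C := (hT.iterate m) hp
      set ρ : ℝ := min r δ / 4 with hρdef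
      have hρ : 0 < ρ := by positivity
      set η : ℝ := a m + ρ with hηdef
      have ham0 : 0 ≤ a m := by
        by_contra h
        push_neg at h
        have := hTa p hp p hp m hm1
        simp at this
        linarith
      have hη0 : 0 ≤ η := by positivity
      have hηr : η ≤ r := by
        have h1 : min r δ ≤ r := min_le_left _ _
        have : η < min r δ / 2 := by rw [hηdef, hρdef]; linarith
        linarith
      have hηδ : η < δ / 2 := by
        have h1 : min r δ ≤ δ := min_le_right _ _
        have : η < min r δ / 2 := by rw [hηdef, hρdef]; linarith
        linarith
      have hev1 : ∀ᶠ n in atTop, ‖z n - u‖ < r + η := by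
        apply eventually_lt_of_limsup_lt _ (hbd u)
        calc φ u ≤ r + a m := key1 m hm1
          _ < r + η := by rw [hηdef]; linarith
      have hev2 : ∀ᶠ n in atTop, ‖z n - p‖ < r + η := by
        apply eventually_lt_of_limsup_lt _ (hbd p)
        show φ p < r + η
        rw [← hrdef]; linarith [hρ, ham0]
      set w : X := (1/2 : ℝ) • u + (1/2 : ℝ) • p with hwdef
      have hwC : w ∈ C := hCcv hu hp (by norm_num) (by norm_num) (by norm_num)
      have hbound : ∀ᶠ n in atTop, ‖z n - w‖ ≤ (r + η) - δ/2 := by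
        filter_upwards [hev1, hev2] with n h1 h2
        have hsep : ε ≤ ‖(z n - u) - (z n - p)‖ := by
          have : (z n - u) - (z n - p) = -(u - p) := by abel
          rw [this, norm_neg]
          exact hcon
        have hsum := hUC η (z n - u) (z n - p) hη0 hηr h1.le h2.le hsep
        have heq : z n - w = (1/2 : ℝ) • ((z n - u) + (z n - p)) := by
          rw [hwdef]; module
        rw [heq, norm_smul, Real.norm_of_nonneg (by norm_num : (0:ℝ) ≤ 1/2)]
        linarith
      have hφw : φ w ≤ (r + η) - δ/2 := limsup_le_of_le (hcb w) hbound
      have := hmin w hwC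
      linarith
    · -- r = 0 : z n → p
      have hzp : Tendsto (fun n => ‖z n - p‖) atTop (nhds 0) := by
        rw [tendsto_order]
        constructor
        · intro b hb
          exact Eventually.of_forall fun n => lt_of_lt_of_le hb (norm_nonneg _)
        · intro b hb
          apply eventually_lt_of_limsup_lt _ (hbd p)
          show φ p < b
          rw [← hrdef, ← hr]; exact hb
      have hfix : ∀ m, 1 ≤ m → ‖T^[m] p - p‖ ≤ a m := by
        intro m hm
        have hb : ∀ n, ‖T^[m] p - p‖ ≤ (‖z n - p‖ + a m) + ‖z (n + m) - p‖ := by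
          intro n
          have h1 : ‖T^[m] p - z (n + m)‖ ≤ ‖p - z n‖ + a m := by
            have : z (n + m) = T^[m] (z n) := by
              rw [hzdef]; simp only; rw [add_comm n m, Function.iterate_add_apply]
            rw [this]
            exact hTa p hp (z n) (hz n) m hm
          calc ‖T^[m] p - p‖ ≤ ‖T^[m] p - z (n + m)‖ + ‖z (n + m) - p‖ :=
                norm_sub_le_norm_sub_add_norm_sub _ _ _
            _ ≤ (‖p - z n‖ + a m) + ‖z (n + m) - p‖ := by linarith
            _ = (‖z n - p‖ + a m) + ‖z (n + m) - p‖ := by rw [norm_sub_rev]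
        have hlim : Tendsto (fun n => (‖z n - p‖ + a m) + ‖z (n + m) - p‖) atTop
            (nhds ((0 + a m) + 0)) := by
          exact ((hzp.add tendsto_const_nhds).add ((tendsto_add_atTop_iff_nat m).mpr hzp))
        have := ge_of_tendsto' hlim hb
        linarith [this]
      filter_upwards [halim.eventually (gt_mem_nhds hε), eventually_ge_atTop 1] with m h1 h2
      exact lt_of_le_of_lt (hfix m h2) h1
  -- conclude : T p = p
  have hiter : Tendsto (fun m => ‖T^[m] p - p‖) atTop (nhds 0) := by
    rw [tendsto_order]
    refine ⟨fun b hb => Eventually.of_forall fun n => lt_of_lt_of_le hb (norm_nonneg _),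
      fun b hb => claim b hb⟩
  have hiter' : Tendsto (fun m => T^[m] p) atTop (nhds p) := by
    rw [tendsto_iff_norm_sub_tendsto_zero]
    exact hiter
  have hTp : Tendsto (fun m => T^[m+1] p) atTop (nhds (T p)) := by
    rw [tendsto_iff_norm_sub_tendsto_zero]
    have hb : ∀ m, ‖T^[m+1] p - T p‖ ≤ L * ‖T^[m] p - p‖ := by
      intro m
      rw [Function.iterate_succ_apply']
      exact hTL1 _ ((hT.iterate m) hp) _ hp
    have hg : Tendsto (fun m => L * ‖T^[m] p - p‖) atTop (nhds 0) := by
      have : Tendsto (fun m => L * ‖T^[m] p - p‖) atTop (nhds (L * 0)) :=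
        tendsto_const_nhds.mul hiter
      simpa using this
    exact squeeze_zero' (Eventually.of_forall fun m => norm_nonneg _)
      (Eventually.of_forall hb) hg
  have hp' : Tendsto (fun m => T^[m+1] p) atTop (nhds p) :=
    (tendsto_add_atTop_iff_nat 1).mpr hiter'
  exact ⟨p, hp, (tendsto_nhds_unique hTp hp')⟩

/-- Relation (3.10): `‖x n - T (x n)‖ → 0`. -/
theorem stmt_10
    {X : Type*} [NormedAddCommGroup X] [NormedSpace ℝ X]
    [CompleteSpace X] [UniformConvexSpace X]
    (C : Set X) (hC : C.Nonempty) (hCcp : IsCompact C) (hCcv : Convex ℝ C)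
    (T : X → X) (hT : Set.MapsTo T C C)
    (L : ℝ) (hL : 0 < L)
    (hTL : ∀ x ∈ C, ∀ y ∈ C, ∀ n, 1 ≤ n → ‖T^[n] x - T^[n] y‖ ≤ L * ‖x - y‖)
    (a : ℕ → ℝ) (ha : ∀ n, a n ∈ Set.Ico (0 : ℝ) 1)
    (halim : Filter.Tendsto a Filter.atTop (nhds 0))
    (hasum : Summable a)
    (hTa : ∀ x ∈ C, ∀ y ∈ C, ∀ n, 1 ≤ n → ‖T^[n] x - T^[n] y‖ ≤ ‖x - y‖ + a n)
    (α : ℕ → ℝ) (a' b' : ℝ) (ha' : 0 < a') (hb' : b' < 1)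
    (hα : ∀ n, a' ≤ α n ∧ α n ≤ b')
    (x y : ℕ → X)
    (hx0 : x 0 ∈ C)
    (hxC : ∀ n, x n ∈ C) (hyC : ∀ n, y n ∈ C)
    (hy : ∀ n, y n = (1 - α n) • x n + α n • T^[n] (x n))
    (hx : ∀ n, x (n + 1) = T^[n] (y n)) :
    Filter.Tendsto (fun n => ‖x n - T (x n)‖) Filter.atTop (nhds 0) := by
  -- basic facts
  have ha0 : ∀ n, 0 ≤ a n := fun n => (ha n).1
  have hα0 : ∀ n, 0 < α n := fun n => lt_of_lt_of_le ha' (hα n).1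
  have hα1 : ∀ n, α n < 1 := fun n => lt_of_le_of_lt (hα n).2 hb'
  have hTL1 : ∀ u ∈ C, ∀ v ∈ C, ‖T u - T v‖ ≤ L * ‖u - v‖ := by
    intro u hu v hv
    have := hTL u hu v hv 1 le_rfl
    simpa using this
  -- fixed point
  obtain ⟨p, hp, hfp⟩ := exists_fixed C hC hCcp hCcv T hT L hTL1 a halim hTa
  have hfpn : ∀ n, T^[n] p = p := fun n => Function.iterate_fixed hfp n
  have hTnxC : ∀ n, T^[n] (x n) ∈ C := fun n => (hT.iterate n) (hxC n)
  -- estimate for ‖T^[n] x n - p‖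
  have hup : ∀ n, 1 ≤ n → ‖T^[n] (x n) - p‖ ≤ ‖x n - p‖ + a n := by
    intro n hn
    have := hTa (x n) (hxC n) p hp n hn
    rwa [hfpn n] at this
  -- estimate for ‖y n - p‖
  have hynp : ∀ n, 1 ≤ n → ‖y n - p‖ ≤ ‖x n - p‖ + a n := by
    intro n hn
    have heq : y n - p = (1 - α n) • (x n - p) + α n • (T^[n] (x n) - p) := by
      rw [hy n]; module
    calc ‖y n - p‖ ≤ ‖(1 - α n) • (x n - p)‖ + ‖α n • (T^[n] (x n) - p)‖ := by
          rw [heq]; exact norm_add_le _ _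
      _ = (1 - α n) * ‖x n - p‖ + α n * ‖T^[n] (x n) - p‖ := by
          rw [norm_smul, norm_smul, Real.norm_of_nonneg (by linarith [hα1 n]),
            Real.norm_of_nonneg (hα0 n).le]
      _ ≤ (1 - α n) * ‖x n - p‖ + α n * (‖x n - p‖ + a n) := by
          have := hup n hn
          nlinarith [hα0 n]
      _ ≤ ‖x n - p‖ + a n := by nlinarith [hα0 n, hα1 n, ha0 n]
  -- step estimate
  have hstep : ∀ n, ‖x (n + 1) - p‖ ≤ ‖x n - p‖ + 2 * a n := by
    intro n
    rcases Nat.eq_zero_or_pos n with rfl | hn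
    · have h1 : x 1 = y 0 := by rw [hx 0]; simp
      have h2 : y 0 = x 0 := by
        rw [hy 0]; simp only [Function.iterate_zero_apply]; module
      rw [h1, h2]
      linarith [ha0 0]
    · have h1 : ‖x (n + 1) - p‖ ≤ ‖y n - p‖ + a n := by
        rw [hx n]
        have := hTa (y n) (hyC n) p hp n hn
        rwa [hfpn n] at this
      linarith [hynp n hn]
  -- convergence of ‖x n - p‖
  obtain ⟨l, hl⟩ := seq_conv (c := fun n => ‖x n - p‖) (e := fun n => 2 * a n)
    (fun n => norm_nonneg _) (fun n => mul_nonneg (by norm_num) (ha0 n)) (hasum.mul_left 2) hstep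
  have hl0 : 0 ≤ l := ge_of_tendsto' hl fun n => norm_nonneg _
  -- convergence of ‖y n - p‖ to the same limit
  have hylim : Tendsto (fun n => ‖y n - p‖) atTop (nhds l) := by
    have hlow : Tendsto (fun n => ‖x (n + 1) - p‖ - a n) atTop (nhds l) := by
      have h1 : Tendsto (fun n => ‖x (n + 1) - p‖) atTop (nhds l) :=
        (tendsto_add_atTop_iff_nat 1).mpr hl
      simpa using h1.sub halim
    have hhigh : Tendsto (fun n => ‖x n - p‖ + a n) atTop (nhds l) := by
      simpa using hl.add halim
    refine tendsto_of_tendsto_of_tendsto_of_le_of_le' hlow hhigh ?_ ?_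
    · filter_upwards [eventually_ge_atTop 1] with n hn
      have h1 : ‖x (n + 1) - p‖ ≤ ‖y n - p‖ + a n := by
        rw [hx n]
        have := hTa (y n) (hyC n) p hp n hn
        rwa [hfpn n] at this
      linarith
    · filter_upwards [eventually_ge_atTop 1] with n hn
      exact hynp n hn
  -- Schu's lemma : d n := ‖T^[n] x n - x n‖ → 0
  have hd : Tendsto (fun n => ‖T^[n] (x n) - x n‖) atTop (nhds 0) := by
    rcases hl0.lt_or_eq with hlpos | hlzero
    · -- l > 0 case
      rw [tendsto_order]
      constructor
      · intro b hb
        exact Eventually.of_forall fun n => lt_of_lt_of_le hb (norm_nonneg _)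
      intro ε hε
      obtain ⟨δ, hδ, hUC⟩ := uc_slack (X := X) hε hlpos
      set γ : ℝ := min a' (1 - b') * δ with hγdef
      have hγ : 0 < γ := by
        apply mul_pos _ hδ
        exact lt_min ha' (by linarith)
      have hη : Tendsto (fun n => |‖x n - p‖ - l| + a n) atTop (nhds 0) := by
        have h1 : Tendsto (fun n => |‖x n - p‖ - l|) atTop (nhds 0) := by
          have := (hl.sub (tendsto_const_nhds (x := l))).abs
          simpa using this
        simpa using h1.add halim
      have hmin2 : (0:ℝ) < min l (γ/2) := lt_min hlpos (by linarith)
      filter_upwards [hη.eventually (gt_mem_nhds hmin2),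
        hylim.eventually (lt_mem_nhds (show l - γ/2 < l by linarith)),
        eventually_ge_atTop 1] with n hηn hyn hn1
      by_contra hcon
      push_neg at hcon
      -- notation
      set u : X := T^[n] (x n) - p with hudef
      set v : X := x n - p with hvdef
      set η : ℝ := |‖x n - p‖ - l| + a n with hηdef
      have hηabs : 0 ≤ η := add_nonneg (abs_nonneg _) (ha0 n)
      have hη2 : η < γ/2 := lt_of_lt_of_le hηn (min_le_right _ _)
      have hηl : η ≤ l := (lt_of_lt_of_le hηn (min_le_left _ _)).le
      have hv : ‖v‖ ≤ l + η := by
        have := abs_sub_abs_le_abs_sub (‖x n - p‖) l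
        have h2 := le_abs_self (‖x n - p‖ - l)
        have h3 := ha0 n
        rw [hvdef]
        simp only [hηdef]
        linarith [le_abs_self (‖x n - p‖ - l)]
      have hu : ‖u‖ ≤ l + η := by
        have h1 := hup n hn1
        rw [hudef]
        calc ‖T^[n] (x n) - p‖ ≤ ‖x n - p‖ + a n := h1
          _ ≤ l + η := by
            simp only [hηdef]
            linarith [le_abs_self (‖x n - p‖ - l)]
      have hsep : ε ≤ ‖u - v‖ := by
        have : u - v = T^[n] (x n) - x n := by rw [hudef, hvdef]; abel
        rw [this]
        exact hcon
      have hsum := hUC η u v hηabs hηl hu hv hsep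
      -- bound ‖y n - p‖
      have hbound : ‖y n - p‖ ≤ l + η - γ := by
        rcases le_or_gt (α n) (1/2) with hhalf | hhalf
        · have heq : y n - p = (1 - 2 * α n) • v + (α n) • (u + v) := by
            rw [hy n, hudef, hvdef]; module
          have h1 : ‖y n - p‖ ≤ (1 - 2 * α n) * ‖v‖ + α n * ‖u + v‖ := by
            rw [heq]
            calc ‖(1 - 2 * α n) • v + (α n) • (u + v)‖
                ≤ ‖(1 - 2 * α n) • v‖ + ‖(α n) • (u + v)‖ := norm_add_le _ _
              _ = (1 - 2 * α n) * ‖v‖ + α n * ‖u + v‖ := by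
                  rw [norm_smul, norm_smul, Real.norm_of_nonneg (by linarith),
                    Real.norm_of_nonneg (hα0 n).le]
          have hγa : γ ≤ α n * δ := by
            have h2 : min a' (1 - b') * δ ≤ a' * δ :=
              mul_le_mul_of_nonneg_right (min_le_left _ _) hδ.le
            have h3 : a' * δ ≤ α n * δ := mul_le_mul_of_nonneg_right (hα n).1 hδ.le
            rw [hγdef]; linarith
          have e1 : (1 - 2 * α n) * ‖v‖ ≤ (1 - 2 * α n) * (l + η) :=
            mul_le_mul_of_nonneg_left hv (by linarith)
          have e2 : α n * ‖u + v‖ ≤ α n * (2 * (l + η) - δ) :=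
            mul_le_mul_of_nonneg_left hsum (hα0 n).le
          have e3 : (1 - 2 * α n) * (l + η) + α n * (2 * (l + η) - δ)
              = (l + η) - α n * δ := by ring
          linarith
        · have heq : y n - p = (2 * α n - 1) • u + (1 - α n) • (u + v) := by
            rw [hy n, hudef, hvdef]; module
          have h1 : ‖y n - p‖ ≤ (2 * α n - 1) * ‖u‖ + (1 - α n) * ‖u + v‖ := by
            rw [heq]
            calc ‖(2 * α n - 1) • u + (1 - α n) • (u + v)‖
                ≤ ‖(2 * α n - 1) • u‖ + ‖(1 - α n) • (u + v)‖ := norm_add_le _ _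
              _ = (2 * α n - 1) * ‖u‖ + (1 - α n) * ‖u + v‖ := by
                  rw [norm_smul, norm_smul, Real.norm_of_nonneg (by linarith),
                    Real.norm_of_nonneg (by linarith [hα1 n])]
          have hγa : γ ≤ (1 - α n) * δ := by
            have h2 : min a' (1 - b') * δ ≤ (1 - b') * δ :=
              mul_le_mul_of_nonneg_right (min_le_right _ _) hδ.le
            have h3 : (1 - b') * δ ≤ (1 - α n) * δ :=
              mul_le_mul_of_nonneg_right (by linarith [(hα n).2]) hδ.le
            rw [hγdef]; linarith
          have e1 : (2 * α n - 1) * ‖u‖ ≤ (2 * α n - 1) * (l + η) :=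
            mul_le_mul_of_nonneg_left hu (by linarith)
          have e2 : (1 - α n) * ‖u + v‖ ≤ (1 - α n) * (2 * (l + η) - δ) :=
            mul_le_mul_of_nonneg_left hsum (by linarith [hα1 n])
          have e3 : (2 * α n - 1) * (l + η) + (1 - α n) * (2 * (l + η) - δ)
              = (l + η) - (1 - α n) * δ := by ring
          linarith
      linarith
    · -- l = 0 case
      apply squeeze_zero' (Eventually.of_forall fun n => norm_nonneg _)
        (g := fun n => (‖x n - p‖ + a n) + ‖x n - p‖) ?_ ?_
      · filter_upwards [eventually_ge_atTop 1] with n hn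
        calc ‖T^[n] (x n) - x n‖ ≤ ‖T^[n] (x n) - p‖ + ‖p - x n‖ :=
              norm_sub_le_norm_sub_add_norm_sub _ _ _
          _ ≤ (‖x n - p‖ + a n) + ‖x n - p‖ := by
              rw [norm_sub_rev p]
              linarith [hup n hn]
      · rw [← hlzero] at hl
        have := (hl.add halim).add hl
        simpa using this
  -- x (n+1) - x n → 0
  have hxx : Tendsto (fun n => ‖x (n + 1) - x n‖) atTop (nhds 0) := by
    apply squeeze_zero' (Eventually.of_forall fun n => norm_nonneg _)
      (g := fun n => 2 * ‖T^[n] (x n) - x n‖ + a n) ?_ ?_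
    · filter_upwards [eventually_ge_atTop 1] with n hn
      have hyx : ‖y n - x n‖ ≤ ‖T^[n] (x n) - x n‖ := by
        have heq : y n - x n = α n • (T^[n] (x n) - x n) := by rw [hy n]; module
        rw [heq, norm_smul, Real.norm_of_nonneg (hα0 n).le]
        nlinarith [hα1 n, norm_nonneg (T^[n] (x n) - x n), hα0 n]
      have h1 : ‖T^[n] (y n) - T^[n] (x n)‖ ≤ ‖y n - x n‖ + a n :=
        hTa (y n) (hyC n) (x n) (hxC n) n hn
      calc ‖x (n + 1) - x n‖ = ‖T^[n] (y n) - x n‖ := by rw [hx n]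
        _ ≤ ‖T^[n] (y n) - T^[n] (x n)‖ + ‖T^[n] (x n) - x n‖ :=
            norm_sub_le_norm_sub_add_norm_sub _ _ _
        _ ≤ 2 * ‖T^[n] (x n) - x n‖ + a n := by linarith
    · have := ((hd.const_mul 2).add halim)
      simpa using this
  -- final estimate
  have key : ∀ n, ‖x (n+2) - T (x (n+2))‖ ≤
      ‖T^[n+2] (x (n+2)) - x (n+2)‖ +
      L * (L * ‖x (n+2) - x (n+1)‖ + ‖T^[n+1] (x (n+1)) - x (n+1)‖ + ‖x (n+1) - x (n+2)‖) := by
    intro n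
    have hTiter : T^[n+2] (x (n+2)) = T (T^[n+1] (x (n+2))) := Function.iterate_succ_apply' T (n+1) _
    have hc1 : T^[n+1] (x (n+2)) ∈ C := (hT.iterate (n+1)) (hxC (n+2))
    have h1 : ‖T^[n+2] (x (n+2)) - T (x (n+2))‖ ≤ L * ‖T^[n+1] (x (n+2)) - x (n+2)‖ := by
      rw [hTiter]
      exact hTL1 _ hc1 _ (hxC (n+2))
    have h2 : ‖T^[n+1] (x (n+2)) - T^[n+1] (x (n+1))‖ ≤ L * ‖x (n+2) - x (n+1)‖ :=
      hTL (x (n+2)) (hxC (n+2)) (x (n+1)) (hxC (n+1)) (n+1) (Nat.le_add_left 1 n)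
    have h3 : ‖T^[n+1] (x (n+2)) - x (n+2)‖ ≤
        ‖T^[n+1] (x (n+2)) - T^[n+1] (x (n+1))‖ + ‖T^[n+1] (x (n+1)) - x (n+1)‖ +
          ‖x (n+1) - x (n+2)‖ := by
      have := norm_add₃_le (a := T^[n+1] (x (n+2)) - T^[n+1] (x (n+1)))
        (b := T^[n+1] (x (n+1)) - x (n+1)) (c := x (n+1) - x (n+2))
      have heq : T^[n+1] (x (n+2)) - T^[n+1] (x (n+1)) + (T^[n+1] (x (n+1)) - x (n+1)) +
          (x (n+1) - x (n+2)) = T^[n+1] (x (n+2)) - x (n+2) := by abel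
      rwa [heq] at this
    have h4 : ‖x (n+2) - T (x (n+2))‖ ≤
        ‖x (n+2) - T^[n+2] (x (n+2))‖ + ‖T^[n+2] (x (n+2)) - T (x (n+2))‖ :=
      norm_sub_le_norm_sub_add_norm_sub _ _ _
    have h5 : L * ‖T^[n+1] (x (n+2)) - x (n+2)‖ ≤
        L * (L * ‖x (n+2) - x (n+1)‖ + ‖T^[n+1] (x (n+1)) - x (n+1)‖ + ‖x (n+1) - x (n+2)‖) := by
      apply mul_le_mul_of_nonneg_left _ hL.le
      linarith
    rw [norm_sub_rev (x (n+2)) (T^[n+2] (x (n+2)))] at h4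
    linarith
  have hgoal2 : Tendsto (fun n => ‖x (n+2) - T (x (n+2))‖) atTop (nhds 0) := by
    apply squeeze_zero' (Eventually.of_forall fun n => norm_nonneg _)
      (Eventually.of_forall key) ?_
    have hd2 : Tendsto (fun n => ‖T^[n+2] (x (n+2)) - x (n+2)‖) atTop (nhds 0) :=
      (tendsto_add_atTop_iff_nat 2).mpr hd
    have hd1 : Tendsto (fun n => ‖T^[n+1] (x (n+1)) - x (n+1)‖) atTop (nhds 0) :=
      (tendsto_add_atTop_iff_nat 1).mpr hd
    have hq : Tendsto (fun n => ‖x (n+2) - x (n+1)‖) atTop (nhds 0) := by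
      have := (tendsto_add_atTop_iff_nat 1).mpr hxx
      simpa using this
    have hq' : Tendsto (fun n => ‖x (n+1) - x (n+2)‖) atTop (nhds 0) := by
      have : (fun n => ‖x (n+1) - x (n+2)‖) = fun n => ‖x (n+2) - x (n+1)‖ := by
        funext n; rw [norm_sub_rev]
      rw [this]; exact hq
    have := hd2.add ((((hq.const_mul L).add hd1).add hq').const_mul L)
    simpa using this
  exact (tendsto_add_atTop_iff_nat 2).mp hgoal2
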